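/- If Ω ⊆ ℍ satisfies Ω ∩ ℝ ≠ ∅ and Ω ∩ ℂ_I is a domain (nonempty open connected set) in ℂ_I for every imaginary unit I ∈ 𝕊, then Ω is a domain (open and connected) in the slice topology τ_s(ℍ). -/

import Mathlib

open scoped Quaternion

/-- The slice `ℂ_I = ℝ + ℝI` inside the quaternions. -/
def qslice (I : ℍ[ℝ]) : Set ℍ[ℝ] := {q | ∃ x y : ℝ, q = (x : ℍ[ℝ]) + y • I}

/-- The slice topology on `ℍ`. -/
noncomputable def sliceTopology : TopologicalSpace ℍ[ℝ] :=
  ⨆ I ∈ {I : ℍ[ℝ] | I ^ 2 = -1},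
    TopologicalSpace.coinduced (Subtype.val : qslice I → ℍ[ℝ]) inferInstance

lemma exists_slice (q : ℍ[ℝ]) : ∃ I : ℍ[ℝ], I ^ 2 = -1 ∧ q ∈ qslice I := by
  by_cases hq : q.im = 0
  · refine ⟨⟨0,1,0,0⟩, ?_, q.re, 0, ?_⟩
    · exact (by ext <;> simp [pow_two, Quaternion.re_mul, Quaternion.imI_mul, Quaternion.imJ_mul,
        Quaternion.imK_mul] : (⟨0,1,0,0⟩ : ℍ[ℝ]) ^ 2 = -1)
    · have := q.re_add_im
      rw [hq, add_zero] at this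
      convert this.symm using 1
      simp
      exact zero_smul ℝ _
  · set v := q.im with hv
    have hn : ‖v‖ ≠ 0 := norm_ne_zero_iff.mpr hq
    refine ⟨‖v‖⁻¹ • v, ?_, q.re, ‖v‖, ?_⟩
    · have h1 : (‖v‖⁻¹ • v) ^ 2 = (‖v‖⁻¹ * ‖v‖⁻¹) • (v ^ 2) := by
        rw [pow_two, pow_two, smul_mul_smul_comm]
      have h2 : (‖v‖⁻¹ * ‖v‖⁻¹) * (‖v‖ * ‖v‖) = 1 := by field_simp
      rw [h1, Quaternion.im_sq, Quaternion.normSq_eq_norm_mul_self, smul_neg, ← hv]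
      rw [show ((‖v‖ * ‖v‖ : ℝ) : ℍ[ℝ]) = (‖v‖ * ‖v‖ : ℝ) • (1 : ℍ[ℝ]) by
        rw [← Quaternion.coe_one, ← Quaternion.coe_smul, smul_eq_mul, mul_one]]
      rw [smul_smul, h2, one_smul]
    · rw [smul_smul, mul_inv_cancel₀ hn, one_smul, q.re_add_im]

lemma real_mem_slice (r : ℝ) (I : ℍ[ℝ]) : (r : ℍ[ℝ]) ∈ qslice I :=
  ⟨r, 0, by simp⟩

/-- If `Ω` meets `ℝ` and every trace `Ω ∩ ℂ_I` is a domain (nonempty open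
connected) in `ℂ_I`, then `Ω` is a domain in the slice topology. -/
theorem st_domain_of_slicewise_domains (Ω : Set ℍ[ℝ])
    (hR : (Ω ∩ Set.range (fun r : ℝ => (r : ℍ[ℝ]))).Nonempty)
    (h : ∀ I : ℍ[ℝ], I ^ 2 = -1 →
      IsOpen (Subtype.val ⁻¹' Ω : Set (qslice I)) ∧
      IsConnected (Subtype.val ⁻¹' Ω : Set (qslice I))) :
    @IsOpen ℍ[ℝ] sliceTopology Ω ∧ @IsConnected ℍ[ℝ] sliceTopology Ω := by
  obtain ⟨p, hpΩ, r, rfl⟩ := hR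
  have hcont : ∀ I : ℍ[ℝ], I ^ 2 = -1 →
      @Continuous (qslice I) ℍ[ℝ] _ sliceTopology (Subtype.val : qslice I → ℍ[ℝ]) := by
    intro I hI
    rw [continuous_iff_coinduced_le]
    exact le_iSup₂ (f := fun I (_ : I ∈ {I : ℍ[ℝ] | I ^ 2 = -1}) =>
      TopologicalSpace.coinduced (Subtype.val : qslice I → ℍ[ℝ]) inferInstance) I hI
  constructor
  · rw [sliceTopology, isOpen_iSup_iff]
    intro I
    rw [isOpen_iSup_iff]
    intro hI
    rw [isOpen_coinduced]
    exact (h I hI).1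
  · have hcover : Ω = ⋃₀ {s | ∃ I : ℍ[ℝ], I ^ 2 = -1 ∧ s = Ω ∩ qslice I} := by
      apply Set.Subset.antisymm
      · intro q hqΩ
        obtain ⟨I, hI, hqI⟩ := exists_slice q
        exact ⟨Ω ∩ qslice I, ⟨I, hI, rfl⟩, hqΩ, hqI⟩
      · rintro q ⟨s, ⟨I, hI, rfl⟩, hq, -⟩
        exact hq
    have hconn : ∀ s ∈ {s | ∃ I : ℍ[ℝ], I ^ 2 = -1 ∧ s = Ω ∩ qslice I},
        @IsConnected ℍ[ℝ] sliceTopology s := by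
      rintro s ⟨I, hI, rfl⟩
      have := @IsConnected.image (qslice I) ℍ[ℝ] _ sliceTopology _ (h I hI).2
        Subtype.val (@Continuous.continuousOn (qslice I) ℍ[ℝ] _ sliceTopology
          Subtype.val _ (hcont I hI))
      rwa [Subtype.image_preimage_coe, Set.inter_comm] at this
    constructor
    · exact ⟨(r : ℍ[ℝ]), hpΩ⟩
    · rw [hcover]
      exact @isPreconnected_sUnion ℍ[ℝ] sliceTopology (r : ℍ[ℝ]) _
        (by rintro s ⟨I, hI, rfl⟩; exact ⟨hpΩ, real_mem_slice r I⟩)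
        (fun s hs => (hconn s hs).2)
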